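/- Define Φ̂ : ℝ → ℝ by Φ̂(t) = (2/π)√(e^{−t} − e^{−2t}) for t ≥ 0 and Φ̂(t) = 0 for t ≤ 0, and define Φ(t) = ∑_{k ∈ ℤ} Φ̂(t + k) (the sum converges for every t). Then Φ(0) < Φ(log 2); equivalently, ∑_{k=1}^∞ √(e^{−k} − e^{−2k}) < ∑_{k=0}^∞ √(e^{−(log 2 + k)} − e^{−2(log 2 + k)}). In particular Φ is not a constant function. -/
import Mathlib


open Real

/-- The density `Φ̂` of the limit measure: `(2/π)√(e^{-t} - e^{-2t})` for `t ≥ 0`,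
and `0` for `t ≤ 0`. -/
noncomputable def Phihat (t : ℝ) : ℝ :=
  if 0 ≤ t then (2 / Real.pi) * Real.sqrt (Real.exp (-t) - Real.exp (-2 * t)) else 0

/-- The periodization `Φ(t) = ∑_{k ∈ ℤ} Φ̂(t + k)`. -/
noncomputable def Phi (t : ℝ) : ℝ := ∑' k : ℤ, Phihat (t + k)

lemma Phihat_of_neg {t : ℝ} (h : t < 0) : Phihat t = 0 := if_neg (not_le.mpr h)

lemma Phihat_of_nonneg {t : ℝ} (h : 0 ≤ t) :
    Phihat t = (2 / Real.pi) * Real.sqrt (Real.exp (-t) - Real.exp (-2 * t)) := if_pos h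

lemma Phihat_nonneg (t : ℝ) : 0 ≤ Phihat t := by
  unfold Phihat
  split_ifs
  · exact mul_nonneg (by positivity) (Real.sqrt_nonneg _)
  · exact le_rfl

lemma sqrt_term_le (t : ℝ) :
    Real.sqrt (Real.exp (-t) - Real.exp (-2 * t)) ≤ Real.exp (-t / 2) := by
  calc Real.sqrt (Real.exp (-t) - Real.exp (-2 * t)) ≤ Real.sqrt (Real.exp (-t)) := by
        apply Real.sqrt_le_sqrt; nlinarith [Real.exp_pos (-2 * t)]
    _ = Real.exp (-t / 2) := (Real.exp_half _).symm

lemma Phihat_le (t : ℝ) : Phihat t ≤ (2 / Real.pi) * Real.exp (-t / 2) := by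
  unfold Phihat
  split_ifs with h
  · exact mul_le_mul_of_nonneg_left (sqrt_term_le t) (by positivity)
  · positivity

lemma summable_exp_shift (c : ℝ) : Summable (fun n : ℕ => Real.exp (-(c + n) / 2)) := by
  have h : ∀ n : ℕ, Real.exp (-(c + n) / 2) = Real.exp (-c / 2) * Real.exp (-1 / 2) ^ n := by
    intro n
    rw [← Real.exp_nat_mul, ← Real.exp_add]
    ring_nf
  rw [funext h]
  exact (summable_geometric_of_lt_one (Real.exp_nonneg _)
    (Real.exp_lt_one_iff.mpr (by norm_num))).mul_left _

lemma summable_Phihat (t : ℝ) : Summable (fun k : ℤ => Phihat (t + k)) := by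
  apply Summable.of_nat_of_neg_add_one
  · apply Summable.of_nonneg_of_le (fun n => Phihat_nonneg _)
      (fun n => ?_) (((summable_exp_shift t).mul_left (2 / Real.pi)))
    calc Phihat (t + (n : ℤ)) ≤ (2 / Real.pi) * Real.exp (-(t + ((n : ℤ) : ℝ)) / 2) :=
          Phihat_le _
      _ = (2 / Real.pi) * Real.exp (-(t + n) / 2) := by push_cast; ring_nf
  · apply summable_of_ne_finset_zero (s := Finset.range (⌈t⌉₊ + 1))
    intro n hn
    simp only [Finset.mem_range, not_lt] at hn
    apply Phihat_of_neg
    have h2 : (⌈t⌉₊ : ℝ) ≤ n := Nat.cast_le.mpr (by omega)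
    have h3 : t ≤ (⌈t⌉₊ : ℝ) := Nat.le_ceil t
    push_cast
    linarith

theorem Phi_not_constant :
    -- the sum defining Φ converges for every t
    (∀ t : ℝ, Summable (fun k : ℤ => Phihat (t + k))) ∧
    Phi 0 < Phi (Real.log 2) ∧
    -- equivalently, in terms of explicit sums
    (∑' k : ℕ, Real.sqrt (Real.exp (-(k + 1 : ℝ)) - Real.exp (-2 * (k + 1 : ℝ)))) <
      (∑' k : ℕ, Real.sqrt (Real.exp (-(Real.log 2 + k)) -
        Real.exp (-2 * (Real.log 2 + k)))) ∧
    -- in particular Φ is not a constant function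
    ¬ (∀ s t : ℝ, Phi s = Phi t) := by
  set A : ℕ → ℝ := fun k => Real.sqrt (Real.exp (-(k + 1 : ℝ)) - Real.exp (-2 * (k + 1 : ℝ)))
    with hA
  set B : ℕ → ℝ := fun k => Real.sqrt (Real.exp (-(Real.log 2 + k)) -
    Real.exp (-2 * (Real.log 2 + k))) with hB
  have hlog2pos : 0 < Real.log 2 := Real.log_pos (by norm_num)
  have hlog2lt : Real.log 2 < 1 := by linarith [Real.log_two_lt_d9]
  -- summability of B
  have hBsum : Summable B := by
    apply Summable.of_nonneg_of_le (fun n => Real.sqrt_nonneg _) (fun n => ?_)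
      (summable_exp_shift (Real.log 2))
    simpa using sqrt_term_le (Real.log 2 + n)
  -- pointwise strict inequality A k < B k
  have hAB : ∀ k : ℕ, A k < B k := by
    intro k
    apply Real.sqrt_lt_sqrt
    · have h := Real.exp_le_exp.mpr (show -2 * ((k : ℝ) + 1) ≤ -((k : ℝ) + 1) by
        nlinarith [Nat.cast_nonneg (α := ℝ) k])
      linarith
    · set u : ℝ := Real.exp (-(k : ℝ)) with hu
      set v : ℝ := Real.exp (-1 : ℝ) with hv
      have hupos : 0 < u := Real.exp_pos _
      have hu1 : u ≤ 1 := Real.exp_le_one_iff.mpr (by simp)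
      have hvpos : 0 < v := Real.exp_pos _
      have hv1 : v < 0.37 := by
        rw [hv, Real.exp_neg, inv_lt_iff_one_lt_mul₀ (Real.exp_pos _)]
        nlinarith [Real.exp_one_gt_d9]
      have e1 : Real.exp (-((k : ℝ) + 1)) = u * v := by
        rw [hu, hv, ← Real.exp_add]; ring_nf
      have e2 : Real.exp (-2 * ((k : ℝ) + 1)) = (u * v) ^ 2 := by
        rw [← e1, sq, ← Real.exp_add]; ring_nf
      have e3 : Real.exp (-(Real.log 2 + (k : ℝ))) = u / 2 := by
        have h2 : Real.exp (-Real.log 2) = 1 / 2 := by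
          rw [Real.exp_neg, Real.exp_log (by norm_num : (0:ℝ) < 2)]; norm_num
        rw [hu, show -(Real.log 2 + (k : ℝ)) = -(k : ℝ) + -Real.log 2 by ring,
          Real.exp_add, h2]
        ring
      have e4 : Real.exp (-2 * (Real.log 2 + (k : ℝ))) = (u / 2) ^ 2 := by
        rw [← e3, sq, ← Real.exp_add]; ring_nf
      rw [e1, e2, e3, e4]
      have huu : u ^ 2 ≤ u := by nlinarith
      have f1 : u ^ 2 * (1/4 - v^2) ≤ u * (1/4 - v^2) :=
        mul_le_mul_of_nonneg_right huu (by nlinarith)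
      have f2 : 0 < u * (v - 1/2)^2 := mul_pos hupos (by nlinarith)
      nlinarith [f1, f2]
  -- strict inequality of sums
  have hsum_lt : (∑' k : ℕ, A k) < ∑' k : ℕ, B k :=
    Summable.tsum_lt_tsum_of_nonneg (fun n => Real.sqrt_nonneg _) (fun n => (hAB n).le)
      (hAB 0) hBsum
  have hASum : Summable A :=
    Summable.of_nonneg_of_le (fun n => Real.sqrt_nonneg _) (fun n => (hAB n).le) hBsum
  have hπ : (0:ℝ) < 2 / Real.pi := by positivity
  -- auxiliary sequence for Phi 0
  set C : ℕ → ℝ := fun n => Real.sqrt (Real.exp (-(n : ℝ)) - Real.exp (-2 * (n : ℝ))) with hC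
  have hCsum : Summable C := by
    apply Summable.of_nonneg_of_le (fun n => Real.sqrt_nonneg _) (fun n => ?_)
      (summable_exp_shift 0)
    simpa using sqrt_term_le (n : ℝ)
  have hCA : ∀ n : ℕ, C (n + 1) = A n := by
    intro n
    simp only [hC, hA]
    push_cast
    ring_nf
  -- compute Phi 0
  have hPhi0 : Phi 0 = (2 / Real.pi) * ∑' k : ℕ, A k := by
    have hterm : ∀ n : ℕ, Phihat ((0:ℝ) + ((n : ℤ) : ℝ)) = (2 / Real.pi) * C n := by
      intro n
      rw [Phihat_of_nonneg (by positivity)]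
      simp only [hC]
      push_cast
      ring_nf
    have hnegzero : ∀ n : ℕ, Phihat ((0:ℝ) + ((-(n + 1) : ℤ) : ℝ)) = 0 := by
      intro n
      apply Phihat_of_neg
      push_cast
      have : (0:ℝ) ≤ n := Nat.cast_nonneg n
      linarith
    have hnat : Summable (fun n : ℕ => Phihat ((0:ℝ) + ((n : ℤ) : ℝ))) := by
      rw [funext hterm]; exact hCsum.mul_left _
    rw [Phi, tsum_of_nat_of_neg_add_one (f := fun k : ℤ => Phihat ((0:ℝ) + (k : ℝ))) hnat
      (by simp only [hnegzero]; exact summable_zero)]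
    rw [funext hterm, tsum_mul_left]
    have hz : (∑' n : ℕ, Phihat ((0:ℝ) + ((-(n + 1) : ℤ) : ℝ))) = 0 := by
      simp only [hnegzero]; exact tsum_zero
    rw [hz, add_zero]
    congr 1
    rw [Summable.tsum_eq_zero_add hCsum]
    have hC0 : C 0 = 0 := by simp [hC]
    rw [hC0, zero_add]
    exact tsum_congr hCA
  -- compute Phi (log 2)
  have hPhiL : Phi (Real.log 2) = (2 / Real.pi) * ∑' k : ℕ, B k := by
    have hterm : ∀ n : ℕ, Phihat (Real.log 2 + ((n : ℤ) : ℝ)) = (2 / Real.pi) * B n := by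
      intro n
      rw [Phihat_of_nonneg (by positivity)]
      simp only [hB]
      push_cast
      ring_nf
    have hnegzero : ∀ n : ℕ, Phihat (Real.log 2 + ((-(n + 1) : ℤ) : ℝ)) = 0 := by
      intro n
      apply Phihat_of_neg
      push_cast
      have : (0:ℝ) ≤ n := Nat.cast_nonneg n
      linarith
    have hnat : Summable (fun n : ℕ => Phihat (Real.log 2 + ((n : ℤ) : ℝ))) := by
      rw [funext hterm]; exact hBsum.mul_left _
    rw [Phi, tsum_of_nat_of_neg_add_one
      (f := fun k : ℤ => Phihat (Real.log 2 + (k : ℝ))) hnat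
      (by simp only [hnegzero]; exact summable_zero)]
    have hz : (∑' n : ℕ, Phihat (Real.log 2 + ((-(n + 1) : ℤ) : ℝ))) = 0 := by
      simp only [hnegzero]; exact tsum_zero
    rw [hz, add_zero, funext hterm, tsum_mul_left]
  refine ⟨summable_Phihat, ?_, hsum_lt, ?_⟩
  · rw [hPhi0, hPhiL]
    exact mul_lt_mul_of_pos_left hsum_lt hπ
  · intro h
    have := h 0 (Real.log 2)
    rw [hPhi0, hPhiL] at this
    exact absurd this (ne_of_lt (mul_lt_mul_of_pos_left hsum_lt hπ))
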